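/- Let $0 < c_1, \ldots, c_d < 1$ with $\sum_{j=1}^d c_j^2 = 1$ and $d \geq 2$, and let $L = \{(z_1,\ldots,z_d) \in \mathbb{S}^{2d-1} : |z_j| = c_j \text{ for all } j\}$. Then for $t > \frac{1}{2}(\ln 2 + \ln \frac{c_1^2+1}{(c_1-1)^2})$, the map $\tau_t(z) = \frac{1}{\cosh t + z_1\sinh t}(\sinh t + z_1\cosh t, z_2,\ldots,z_d)$ satisfies $\tau_t(L) \cap L = \emptyset$. -/

import Mathlib

/-- Giroux's map `τ_t` on `ℂ^{d+1}`. -/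
noncomputable def tau (d : ℕ) (t : ℝ) (z : Fin (d + 1) → ℂ) : Fin (d + 1) → ℂ :=
  fun j =>
    if j = 0 then
      ((Real.sinh t : ℂ) + z 0 * (Real.cosh t : ℂ)) /
        ((Real.cosh t : ℂ) + z 0 * (Real.sinh t : ℂ))
    else z j / ((Real.cosh t : ℂ) + z 0 * (Real.sinh t : ℂ))

lemma key_ineq (c0 t : ℝ) (h0 : 0 < c0) (h1 : c0 < 1)
    (ht : t > (1 / 2) * (Real.log 2 + Real.log ((c0 ^ 2 + 1) / (c0 - 1) ^ 2))) :
    2 * c0 * Real.cosh t ≥ (1 + c0 ^ 2) * Real.sinh t → False := by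
  intro h
  have hne : c0 - 1 ≠ 0 := by linarith
  have hA : (0:ℝ) < (c0 ^ 2 + 1) / (c0 - 1) ^ 2 := by positivity
  have h2t : Real.exp (2 * t) > 2 * ((c0 ^ 2 + 1) / (c0 - 1) ^ 2) := by
    have : Real.log 2 + Real.log ((c0 ^ 2 + 1) / (c0 - 1) ^ 2)
        = Real.log (2 * ((c0 ^ 2 + 1) / (c0 - 1) ^ 2)) := by
      rw [Real.log_mul (by norm_num) (ne_of_gt hA)]
    have h2t' : 2 * t > Real.log (2 * ((c0 ^ 2 + 1) / (c0 - 1) ^ 2)) := by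
      rw [← this]; linarith
    calc Real.exp (2 * t) > Real.exp (Real.log (2 * ((c0 ^ 2 + 1) / (c0 - 1) ^ 2))) :=
          Real.exp_lt_exp.mpr h2t'
      _ = 2 * ((c0 ^ 2 + 1) / (c0 - 1) ^ 2) := Real.exp_log (by positivity)
  have hE : Real.exp t > 0 := Real.exp_pos t
  have hEF : Real.exp t * Real.exp (-t) = 1 := by
    rw [← Real.exp_add]; simp
  have hE2 : Real.exp (2 * t) = Real.exp t * Real.exp t := by
    rw [two_mul, Real.exp_add]
  have hFpos : Real.exp (-t) > 0 := Real.exp_pos _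
  rw [Real.cosh_eq, Real.sinh_eq] at h
  have hsq : (c0 - 1) ^ 2 > 0 := by positivity
  -- e^{2t} (c0-1)^2 > 2(c0^2+1) ≥ (1+c0)^2... derive contradiction
  have h2 : Real.exp t * Real.exp t * (c0 - 1) ^ 2 > 2 * (c0 ^ 2 + 1) := by
    rw [← hE2]
    have h2t' : 2 * (c0 ^ 2 + 1) / (c0 - 1) ^ 2 < Real.exp (2 * t) := by
      rw [mul_div_assoc]; exact h2t
    have := (div_lt_iff₀ hsq).mp h2t'
    linarith
  nlinarith [mul_pos hE hFpos, sq_nonneg (1 - c0), sq_nonneg (1 + c0),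
    mul_pos (mul_pos hE hE) hFpos, sq_nonneg (Real.exp t - Real.exp (-t)),
    mul_lt_mul_of_pos_right h2 hFpos]

theorem tau_displaces_toric_fiber (d : ℕ) (hd : 1 ≤ d) (c : Fin (d + 1) → ℝ)
    (hc : ∀ j, 0 < c j ∧ c j < 1) (hsum : ∑ j, c j ^ 2 = 1) (t : ℝ)
    (ht : t > (1 / 2) * (Real.log 2 + Real.log ((c 0 ^ 2 + 1) / (c 0 - 1) ^ 2))) :
    (tau d t '' {z : Fin (d + 1) → ℂ | (∑ j, ‖z j‖ ^ 2 = 1) ∧ ∀ j, ‖z j‖ = c j}) ∩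
      {z : Fin (d + 1) → ℂ | (∑ j, ‖z j‖ ^ 2 = 1) ∧ ∀ j, ‖z j‖ = c j} = ∅ := by
  obtain ⟨hc0, hc1⟩ := hc 0
  ext w
  simp only [Set.mem_inter_iff, Set.mem_image, Set.mem_setOf_eq, Set.mem_empty_iff_false,
    iff_false]
  intro h
  obtain ⟨⟨z, ⟨hz1, hz2⟩, hzw⟩, hw1, hw2⟩ := h
  set s := Real.sinh t with hs
  set ch := Real.cosh t with hch
  set c0 := c 0 with hc0def
  set x := (z 0).re with hx
  set y := (z 0).im with hy
  have hz0 : ‖z 0‖ = c0 := hz2 0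
  have hxy : x ^ 2 + y ^ 2 = c0 ^ 2 := by
    have := congrArg (· ^ 2) hz0
    rw [← this, Complex.sq_norm, Complex.normSq_apply]
    ring
  have hxle : -c0 ≤ x := by
    have h1 : |x| ≤ ‖z 0‖ := Complex.abs_re_le_norm (z 0)
    rw [hz0] at h1
    have := abs_le.mp h1
    linarith [this.1]
  -- key inequality
  have hkey : 2 * c0 * ch < (1 + c0 ^ 2) * s := by
    by_contra hcon
    exact key_ineq c0 t hc0 hc1 ht (by push_neg at hcon; linarith)
  have hchpos : 0 < ch := Real.cosh_pos t
  have hspos : 0 < s := by nlinarith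
  have hchs : ch - c0 * s > 0 := by
    have hcs : ch - s = Real.exp (-t) := Real.cosh_sub_sinh t
    have := Real.exp_pos (-t)
    nlinarith
  -- denominator
  set den := (ch : ℂ) + z 0 * (s : ℂ) with hden
  set num := (s : ℂ) + z 0 * (ch : ℂ) with hnum
  have hdennsq : Complex.normSq den = (ch + x * s) ^ 2 + (y * s) ^ 2 := by
    simp [hden, Complex.normSq_apply, Complex.add_re, Complex.add_im, Complex.mul_re,
      Complex.mul_im, Complex.ofReal_re, Complex.ofReal_im]
    ring
  have hnumnsq : Complex.normSq num = (s + x * ch) ^ 2 + (y * ch) ^ 2 := by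
    simp [hnum, Complex.normSq_apply, Complex.add_re, Complex.add_im, Complex.mul_re,
      Complex.mul_im, Complex.ofReal_re, Complex.ofReal_im]
    ring
  have hdexp : (ch + x * s) ^ 2 + (y * s) ^ 2
      = (ch - c0 * s) ^ 2 + 2 * ((x + c0) * s * ch) := by
    linear_combination s ^ 2 * hxy
  have hdenpos : 0 < Complex.normSq den := by
    rw [hdennsq, hdexp]
    have h2 : 0 ≤ (x + c0) * s * ch :=
      mul_nonneg (mul_nonneg (by linarith) hspos.le) hchpos.le
    nlinarith [pow_pos hchs 2]
  have hdenne : den ≠ 0 := by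
    intro h; rw [h] at hdenpos; simp at hdenpos
  have hw0 : ‖tau d t z 0‖ = c0 := by rw [hzw]; exact hw2 0
  have htz0 : tau d t z 0 = num / den := by
    simp only [tau, if_pos rfl, if_true]
    rfl
  rw [htz0, norm_div] at hw0
  have hdnorm : 0 < ‖den‖ := norm_pos_iff.mpr hdenne
  have hnum_eq : ‖num‖ = c0 * ‖den‖ := (div_eq_iff (ne_of_gt hdnorm)).mp hw0
  have hsq : Complex.normSq num = c0 ^ 2 * Complex.normSq den := by
    have h1 : ‖num‖ ^ 2 = (c0 * ‖den‖) ^ 2 := by rw [hnum_eq]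
    rw [Complex.sq_norm] at h1
    rw [h1, mul_pow, Complex.sq_norm]
  rw [hnumnsq, hdennsq] at hsq
  clear_value s ch c0 x y den num
  clear hsum hz1 hw1 hz2 hw2 hc hzw hw0 htz0 hnum_eq hdnorm hdenne hdenpos hdexp
  clear hnumnsq hdennsq hden hnum hz0 ht hx hy hs hch hc0def
  clear den num w z c t d hd
  -- contradiction
  have hzero : (1 - c0 ^ 2) * ((1 + c0 ^ 2) * s ^ 2 + 2 * x * s * ch) = 0 := by
    linear_combination hsq - (ch ^ 2 - c0 ^ 2 * s ^ 2) * hxy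
  have hp1 : 0 < 1 - c0 ^ 2 := by nlinarith
  have hp2 : 0 < (1 + c0 ^ 2) * s ^ 2 + 2 * x * s * ch := by
    have h1 : 0 < s * ((1 + c0 ^ 2) * s - 2 * c0 * ch) := mul_pos hspos (by linarith)
    have h2 : 0 ≤ (x + c0) * s * ch :=
      mul_nonneg (mul_nonneg (by linarith) hspos.le) hchpos.le
    nlinarith
  nlinarith [mul_pos hp1 hp2]
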